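/- For any two orderings (i_1,…,i_n) and (j_1,…,j_n) of {1,…,n}, the polynomials (t − x_{A_n,i_n})(t − x_{A_{n-1},i_{n-1}})⋯(t − x_{A_1,i_1}) and (t − x_{B_n,j_n})(t − x_{B_{n-1},j_{n-1}})⋯(t − x_{B_1,j_1}) in Q_n[t] are equal, where A_k = {i_1,…,i_{k-1}} and B_k = {j_1,…,j_{k-1}} (with A_1 = B_1 = ∅). Hence the polynomial 𝒫(t) ∈ Q_n[t] is well defined, independent of the ordering of {1,…,n}. -/
import Mathlib


open Polynomial

/-- Generators of the algebra `Qₙ`: pairs `(A, i)` with `A ⊆ {1,…,n}`, `i ∉ A`. -/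
def QGen (n : ℕ) : Type := {p : Finset (Fin n) × Fin n // p.2 ∉ p.1}

theorem notmem_insert {n : ℕ} {A : Finset (Fin n)} {i j : Fin n}
    (hj : j ∉ A) (hij : j ≠ i) : j ∉ insert i A :=
  fun h => (Finset.mem_insert.mp h).elim hij hj

/-- The generator `x_{A,i}` inside the free algebra. -/
def fgen (F : Type*) [Field F] (n : ℕ) (A : Finset (Fin n)) (i : Fin n) (h : i ∉ A) :
    FreeAlgebra F (QGen n) :=
  FreeAlgebra.ι F ⟨(A, i), h⟩

/-- The defining relations of `Qₙ`:
`x_{A∪{i},j} + x_{A,i} = x_{A∪{j},i} + x_{A,j}` and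
`x_{A∪{i},j} · x_{A,i} = x_{A∪{j},i} · x_{A,j}`. -/
inductive QRel (F : Type*) [Field F] (n : ℕ) :
    FreeAlgebra F (QGen n) → FreeAlgebra F (QGen n) → Prop
  | add (A : Finset (Fin n)) (i j : Fin n) (hi : i ∉ A) (hj : j ∉ A) (hij : i ≠ j) :
      QRel F n (fgen F n (insert i A) j (notmem_insert hj (Ne.symm hij)) + fgen F n A i hi)
        (fgen F n (insert j A) i (notmem_insert hi hij) + fgen F n A j hj)
  | mul (A : Finset (Fin n)) (i j : Fin n) (hi : i ∉ A) (hj : j ∉ A) (hij : i ≠ j) :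
      QRel F n (fgen F n (insert i A) j (notmem_insert hj (Ne.symm hij)) * fgen F n A i hi)
        (fgen F n (insert j A) i (notmem_insert hi hij) * fgen F n A j hj)

/-- The universal algebra of pseudo-roots `Qₙ`. -/
def Q (F : Type*) [Field F] (n : ℕ) : Type _ := RingQuot (QRel F n)

noncomputable instance (F : Type*) [Field F] (n : ℕ) : Ring (Q F n) :=
  inferInstanceAs (Ring (RingQuot (QRel F n)))

noncomputable instance (F : Type*) [Field F] (n : ℕ) : Algebra F (Q F n) :=
  inferInstanceAs (Algebra F (RingQuot (QRel F n)))

/-- The pseudo-root `x_{A,i}` in `Qₙ`. -/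
noncomputable def xgen (F : Type*) [Field F] (n : ℕ) (A : Finset (Fin n)) (i : Fin n)
    (h : i ∉ A) : Q F n :=
  RingQuot.mkAlgHom F (QRel F n) (fgen F n A i h)

theorem sigma_notmem {n : ℕ} (σ : Equiv.Perm (Fin n)) (k : Fin n) :
    σ k ∉ (Finset.Iio k).image σ := by
  simp only [Finset.mem_image, Finset.mem_Iio, not_exists, not_and]
  intro a ha h
  exact absurd (σ.injective h) (ne_of_lt ha)

/-- The polynomial `𝒫(t) = (t − x_{Aₙ,iₙ})⋯(t − x_{A₁,i₁})` associated to the ordering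
`(σ 0, σ 1, …, σ (n-1))` of `{1,…,n}`, where `A_k = {σ 0, …, σ (k-1)}`. -/
noncomputable def calPolyOrd (F : Type*) [Field F] (n : ℕ) (σ : Equiv.Perm (Fin n)) :
    Polynomial (Q F n) :=
  ((List.finRange n).reverse.map (fun k =>
    Polynomial.X - Polynomial.C
      (xgen F n ((Finset.Iio k).image σ) (σ k) (sigma_notmem σ k)))).prod

/-- The canonical polynomial `𝒫(t) ∈ Qₙ[t]` (defined via the standard ordering). -/
noncomputable def calPoly (F : Type*) [Field F] (n : ℕ) : Polynomial (Q F n) :=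
  calPolyOrd F n 1

open Polynomial in
theorem xgen_congr (F : Type*) [Field F] (n : ℕ) {A A' : Finset (Fin n)} {i i' : Fin n}
    (hA : A = A') (hi : i = i') (h : i ∉ A) (h' : i' ∉ A') :
    xgen F n A i h = xgen F n A' i' h' := by subst hA; subst hi; rfl

theorem quad {R : Type*} [Ring R] (u v : R) :
    (Polynomial.X - Polynomial.C u) * (Polynomial.X - Polynomial.C v)
      = Polynomial.X ^ 2 - Polynomial.C (u + v) * Polynomial.X + Polynomial.C (u * v) := by
  simp only [Polynomial.C_add, Polynomial.C_mul, sq]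
  rw [sub_mul, mul_sub, mul_sub, Polynomial.X_mul_C]
  noncomm_ring

theorem xgen_add (F : Type*) [Field F] (n : ℕ) (A : Finset (Fin n)) (i j : Fin n)
    (hi : i ∉ A) (hj : j ∉ A) (hij : i ≠ j) :
    xgen F n (insert i A) j (notmem_insert hj (Ne.symm hij)) + xgen F n A i hi
      = xgen F n (insert j A) i (notmem_insert hi hij) + xgen F n A j hj := by
  have := RingQuot.mkAlgHom_rel F (QRel.add (F := F) (n := n) A i j hi hj hij)
  unfold xgen
  rw [map_add, map_add] at this
  exact this

theorem xgen_mul (F : Type*) [Field F] (n : ℕ) (A : Finset (Fin n)) (i j : Fin n)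
    (hi : i ∉ A) (hj : j ∉ A) (hij : i ≠ j) :
    xgen F n (insert i A) j (notmem_insert hj (Ne.symm hij)) * xgen F n A i hi
      = xgen F n (insert j A) i (notmem_insert hi hij) * xgen F n A j hj := by
  have := RingQuot.mkAlgHom_rel F (QRel.mul (F := F) (n := n) A i j hi hj hij)
  unfold xgen
  rw [map_mul, map_mul] at this
  exact this

theorem factor_swap (F : Type*) [Field F] (n : ℕ) (A : Finset (Fin n)) (i j : Fin n)
    (hi : i ∉ A) (hj : j ∉ A) (hij : i ≠ j) :
    (Polynomial.X - Polynomial.C (xgen F n (insert i A) j (notmem_insert hj (Ne.symm hij))))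
        * (Polynomial.X - Polynomial.C (xgen F n A i hi))
      = (Polynomial.X - Polynomial.C (xgen F n (insert j A) i (notmem_insert hi hij)))
        * (Polynomial.X - Polynomial.C (xgen F n A j hj)) := by
  rw [quad, quad, xgen_add F n A i j hi hj hij, xgen_mul F n A i j hi hj hij]

theorem swap_image_Iio {n : ℕ} (a b k : Fin n) (ha : a < k) (hb : b < k) :
    (Finset.Iio k).image (Equiv.swap a b) = Finset.Iio k := by
  apply Finset.ext; intro x
  simp only [Finset.mem_image, Finset.mem_Iio]
  constructor
  · rintro ⟨y, hy, rfl⟩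
    rcases eq_or_ne y a with rfl | hya
    · rw [Equiv.swap_apply_left]; exact hb
    rcases eq_or_ne y b with rfl | hyb
    · rw [Equiv.swap_apply_right]; exact ha
    · rwa [Equiv.swap_apply_of_ne_of_ne hya hyb]
  · intro hx
    refine ⟨Equiv.swap a b x, ?_, Equiv.swap_apply_self a b x⟩
    rcases eq_or_ne x a with rfl | hxa
    · rw [Equiv.swap_apply_left]; exact hb
    rcases eq_or_ne x b with rfl | hxb
    · rw [Equiv.swap_apply_right]; exact ha
    · rwa [Equiv.swap_apply_of_ne_of_ne hxa hxb]

theorem Iio_succ_insert {n m : ℕ} (h : m + 1 < n) :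
    Finset.Iio (⟨m + 1, h⟩ : Fin n) = insert ⟨m, by omega⟩ (Finset.Iio ⟨m, by omega⟩) := by
  ext x
  simp only [Finset.mem_Iio, Finset.mem_insert, Fin.lt_def, Fin.ext_iff]
  omega

theorem calPolyOrd_mul_swap (F : Type*) [Field F] {n : ℕ} (σ : Equiv.Perm (Fin n))
    (m : ℕ) (hm : m + 1 < n) :
    calPolyOrd F n (σ * Equiv.swap ⟨m, by omega⟩ ⟨m + 1, hm⟩) = calPolyOrd F n σ := by
  set a : Fin n := ⟨m, by omega⟩ with ha_def
  set b : Fin n := ⟨m + 1, hm⟩ with hb_def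
  set σ' : Equiv.Perm (Fin n) := σ * Equiv.swap a b with hσ'
  set f : Equiv.Perm (Fin n) → Fin n → Polynomial (Q F n) := fun ρ k =>
    Polynomial.X - Polynomial.C
      (xgen F n ((Finset.Iio k).image ρ) (ρ k) (sigma_notmem ρ k)) with hf
  have hab : a ≠ b := by simp [ha_def, hb_def, Fin.ext_iff]
  have hltlen : m < (List.finRange n).length := by simp; omega
  have hltlen2 : m + 1 < (List.finRange n).length := by simp; omega
  have hdec : List.finRange n =
      (List.finRange n).take m ++ [a, b] ++ (List.finRange n).drop (m + 2) := by
    rw [List.append_assoc]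
    conv_lhs => rw [← List.take_append_drop m (List.finRange n)]
    congr 1
    rw [List.drop_eq_getElem_cons hltlen, List.drop_eq_getElem_cons hltlen2]
    simp [List.getElem_finRange, ha_def, hb_def, Fin.ext_iff]
  -- pointwise agreement off {a, b}
  have hfix : ∀ k : Fin n, k ≠ a → k ≠ b → σ' k = σ k := by
    intro k hka hkb
    simp [hσ', Equiv.Perm.mul_apply, Equiv.swap_apply_of_ne_of_ne hka hkb]
  have himg_lt : ∀ k : Fin n, (k : ℕ) ≤ m →
      (Finset.Iio k).image σ' = (Finset.Iio k).image σ := by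
    intro k hk
    apply Finset.image_congr
    intro x hx
    simp only [Finset.coe_Iio, Set.mem_Iio] at hx
    have hxa : x ≠ a := by
      intro h; apply absurd hx; simp [h, ha_def, Fin.lt_def]; omega
    have hxb : x ≠ b := by
      intro h; apply absurd hx; simp [h, hb_def, Fin.lt_def]
      have := x.isLt; omega
    exact hfix x hxa hxb
  have hsame : ∀ k : Fin n, (k : ℕ) < m ∨ m + 1 < (k : ℕ) → f σ' k = f σ k := by
    intro k hk
    have hka : k ≠ a := by simp [ha_def, Fin.ext_iff]; omega
    have hkb : k ≠ b := by simp [hb_def, Fin.ext_iff]; omega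
    have himg : (Finset.Iio k).image σ' = (Finset.Iio k).image σ := by
      rcases hk with hk | hk
      · exact himg_lt k (by omega)
      · rw [hσ', Equiv.Perm.coe_mul, ← Finset.image_image,
          swap_image_Iio a b k (by simp [ha_def, Fin.lt_def]; omega)
            (by simp [hb_def, Fin.lt_def]; omega)]
    exact congrArg (fun p => Polynomial.X - Polynomial.C p)
      (xgen_congr F n himg (hfix k hka hkb) _ _)
  -- the two middle factors
  have hmid : f σ' b * f σ' a = f σ b * f σ a := by
    set A : Finset (Fin n) := (Finset.Iio a).image σ with hA
    have hi : σ a ∉ A := sigma_notmem σ a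
    have hj : σ b ∉ A := by
      simp only [hA, Finset.mem_image, Finset.mem_Iio, not_exists, not_and]
      intro x hx h
      have := σ.injective h
      subst this
      apply absurd hx
      simp [ha_def, hb_def, Fin.lt_def]
    have hij : σ a ≠ σ b := fun h => hab (σ.injective h)
    have hIiob : Finset.Iio b = insert a (Finset.Iio a) := Iio_succ_insert hm
    have himgA : (Finset.Iio a).image σ' = A := himg_lt a le_rfl
    have hσ'a : σ' a = σ b := by
      simp [hσ', Equiv.Perm.mul_apply, Equiv.swap_apply_left]
    have hσ'b : σ' b = σ a := by
      simp [hσ', Equiv.Perm.mul_apply, Equiv.swap_apply_right]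
    have e1 : f σ' b = Polynomial.X - Polynomial.C
        (xgen F n (insert (σ b) A) (σ a) (notmem_insert hi hij)) := by
      refine congrArg (fun p => Polynomial.X - Polynomial.C p) (xgen_congr F n ?_ hσ'b _ _)
      rw [hIiob, Finset.image_insert, hσ'a, himgA]
    have e2 : f σ' a = Polynomial.X - Polynomial.C
        (xgen F n A (σ b) hj) := by
      refine congrArg (fun p => Polynomial.X - Polynomial.C p) (xgen_congr F n himgA hσ'a _ _)
    have e3 : f σ b = Polynomial.X - Polynomial.C
        (xgen F n (insert (σ a) A) (σ b) (notmem_insert hj (Ne.symm hij))) := by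
      refine congrArg (fun p => Polynomial.X - Polynomial.C p) (xgen_congr F n ?_ rfl _ _)
      rw [hIiob, Finset.image_insert]
    have e4 : f σ a = Polynomial.X - Polynomial.C (xgen F n A (σ a) hi) := rfl
    rw [e1, e2, e3, e4]
    exact (factor_swap F n A (σ a) (σ b) hi hj hij).symm
  -- assemble
  have expand : ∀ ρ : Equiv.Perm (Fin n), calPolyOrd F n ρ =
      (((List.finRange n).drop (m + 2)).map (f ρ)).reverse.prod *
        ((f ρ b * f ρ a) * (((List.finRange n).take m).map (f ρ)).reverse.prod) := by
    intro ρ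
    show (((List.finRange n).reverse.map (f ρ))).prod = _
    conv_lhs => rw [hdec]
    simp [List.reverse_append, List.map_append, List.prod_append, mul_assoc]
  have hD : List.map (f σ') ((List.finRange n).drop (m + 2))
      = List.map (f σ) ((List.finRange n).drop (m + 2)) := by
    apply List.map_congr_left
    intro k hk
    obtain ⟨idx, hidx, hk⟩ := List.mem_iff_getElem.mp hk
    apply hsame
    right
    rw [← hk, List.getElem_drop, List.getElem_finRange]
    simp only [Fin.coe_cast]
    omega
  have hT : List.map (f σ') ((List.finRange n).take m)
      = List.map (f σ) ((List.finRange n).take m) := by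
    apply List.map_congr_left
    intro k hk
    obtain ⟨idx, hidx, hk⟩ := List.mem_iff_getElem.mp hk
    have hidx' : idx < m := by
      have := hidx
      simp only [List.length_take, List.length_finRange, lt_min_iff] at this
      exact this.1
    apply hsame
    left
    rw [← hk, List.getElem_take, List.getElem_finRange]
    simpa using hidx'
  rw [expand σ', expand σ, hmid, hD, hT]

theorem stmt0 (F : Type*) [Field F] (n : ℕ) (σ τ : Equiv.Perm (Fin n)) :
    calPolyOrd F n σ = calPolyOrd F n τ := by
  suffices h : ∀ ρ : Equiv.Perm (Fin n), calPolyOrd F n ρ = calPolyOrd F n 1 by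
    rw [h σ, h τ]
  intro ρ
  cases n with
  | zero => exact congrArg (calPolyOrd F 0) (Subsingleton.elim ρ 1)
  | succ N =>
    have key : ∀ τ' ∈ Submonoid.closure
        (Set.range fun i : Fin N => Equiv.swap i.castSucc i.succ),
        ∀ π : Equiv.Perm (Fin (N + 1)), calPolyOrd F (N + 1) (π * τ') = calPolyOrd F (N + 1) π := by
      intro τ' hτ'
      induction hτ' using Submonoid.closure_induction with
      | mem x hx =>
        obtain ⟨i, rfl⟩ := hx
        intro π
        have hm : (i : ℕ) + 1 < N + 1 := by omega
        exact calPolyOrd_mul_swap F π (i : ℕ) hm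
      | one => intro π; rw [mul_one]
      | mul x y hx hy ihx ihy =>
        intro π
        rw [← mul_assoc, ihy (π * x), ihx π]
    have := key ρ (by rw [Equiv.Perm.mclosure_swap_castSucc_succ]; trivial) 1
    rwa [one_mul] at this
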